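/- Let F₁ and F₂ be fields, let H₁ = ℍ[F₁, a₁, b₁] and H₂ = ℍ[F₂, a₂, b₂] be quaternion algebras, and let φ : H₁ → H₂ be a ring isomorphism that maps the canonical copy of F₁ in H₁ (the range of the algebra map F₁ → H₁) onto the canonical copy of F₂ in H₂. Then φ commutes with the standard conjugations: φ(star x) = star(φ(x)) for every x ∈ H₁. Consequently φ carries trace to trace and norm to norm: φ(x + star x) = φ(x) + star(φ(x)) and φ(x * star x) = φ(x) * star(φ(x)) for all x ∈ H₁. -/

import Mathlib

open Quaternion

private theorem quat_quad {F : Type*} [Field F] (c d : F) (y : ℍ[F, c, d]) :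
    y * y - (y + star y) * y + y * star y = 0 := by
  ext <;> simp <;> ring

/-- A ring isomorphism between quaternion algebras which maps the canonical copy of the
first base field onto the canonical copy of the second commutes with the standard
conjugations, hence carries trace to trace and norm to norm. -/
theorem quaternion_ringEquiv_star_comm {F₁ F₂ : Type*} [Field F₁] [Field F₂]
    (a₁ b₁ : F₁) (a₂ b₂ : F₂)
    (φ : ℍ[F₁, a₁, b₁] ≃+* ℍ[F₂, a₂, b₂])
    (hφ : ⇑φ '' Set.range (algebraMap F₁ ℍ[F₁, a₁, b₁]) =
      Set.range (algebraMap F₂ ℍ[F₂, a₂, b₂])) :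
    (∀ x : ℍ[F₁, a₁, b₁], φ (star x) = star (φ x)) ∧
    (∀ x : ℍ[F₁, a₁, b₁], φ (x + star x) = φ x + star (φ x)) ∧
    (∀ x : ℍ[F₁, a₁, b₁], φ (x * star x) = φ x * star (φ x)) := by
  rw [QuaternionAlgebra.coe_algebraMap, QuaternionAlgebra.coe_algebraMap] at hφ
  have key : ∀ x : ℍ[F₁, a₁, b₁], φ (star x) = star (φ x) := by
    intro x
    have h1 : φ x * φ x - φ (x + star x) * φ x + φ (x * star x) = 0 := by
      have h := quat_quad a₁ b₁ x
      apply_fun φ at h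
      simpa using h
    have h2 : φ x * φ x - (φ x + star (φ x)) * φ x + φ x * star (φ x) = 0 :=
      quat_quad a₂ b₂ (φ x)
    obtain ⟨s, hs⟩ : φ (x + star x)
        ∈ Set.range (QuaternionAlgebra.coe : F₂ → ℍ[F₂, a₂, b₂]) := by
      rw [← hφ]
      exact ⟨x + star x, ⟨2 * x.re, by rw [QuaternionAlgebra.self_add_star', zero_mul, add_zero]⟩, rfl⟩
    obtain ⟨n, hn⟩ : φ (x * star x)
        ∈ Set.range (QuaternionAlgebra.coe : F₂ → ℍ[F₂, a₂, b₂]) := by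
      rw [← hφ]
      exact ⟨x * star x, ⟨(x * star x).re, (QuaternionAlgebra.mul_star_eq_coe x).symm⟩, rfl⟩
    have hA : φ (x + star x) * φ x = φ x * φ x + φ (x * star x) := by
      have he : φ (x + star x) * φ x - (φ x * φ x + φ (x * star x))
          = -(φ x * φ x - φ (x + star x) * φ x + φ (x * star x)) := by abel
      rw [h1, neg_zero] at he
      exact sub_eq_zero.mp he
    have hC : (φ x + star (φ x)) * φ x = φ x * φ x + φ x * star (φ x) := by
      have he : (φ x + star (φ x)) * φ x - (φ x * φ x + φ x * star (φ x))
          = -(φ x * φ x - (φ x + star (φ x)) * φ x + φ x * star (φ x)) := by abel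
      rw [h2, neg_zero] at he
      exact sub_eq_zero.mp he
    have h3 : (φ (x + star x) - (φ x + star (φ x))) * φ x
        = φ (x * star x) - φ x * star (φ x) := by
      rw [sub_mul, hA, hC]; abel
    have hsub : ((s - 2 * (φ x).re : F₂) : ℍ[F₂, a₂, b₂]) * φ x
        = ((n - (φ x * star (φ x)).re : F₂) : ℍ[F₂, a₂, b₂]) := by
      rw [QuaternionAlgebra.coe_sub, QuaternionAlgebra.coe_sub, hs, hn,
        ← (by rw [QuaternionAlgebra.self_add_star', zero_mul, add_zero] :
          φ x + star (φ x) = ((2 * (φ x).re : F₂) : ℍ[F₂, a₂, b₂])),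
        ← QuaternionAlgebra.mul_star_eq_coe (φ x)]
      exact h3
    by_cases hc : (s - 2 * (φ x).re : F₂) = 0
    · have ht : φ (x + star x) = φ x + star (φ x) := by
        rw [← hs, sub_eq_zero.mp hc, QuaternionAlgebra.self_add_star', zero_mul, add_zero]
      have h4 := map_add φ x (star x)
      rw [ht] at h4
      exact (add_left_cancel h4).symm
    · have hxs : φ x = (((s - 2 * (φ x).re)⁻¹ * (n - (φ x * star (φ x)).re) : F₂)
          : ℍ[F₂, a₂, b₂]) := by
        have h5 := congrArg (fun y => (((s - 2 * (φ x).re)⁻¹ : F₂) : ℍ[F₂, a₂, b₂]) * y) hsub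
        rwa [← mul_assoc, ← QuaternionAlgebra.coe_mul, inv_mul_cancel₀ hc,
          QuaternionAlgebra.coe_one, one_mul, ← QuaternionAlgebra.coe_mul] at h5
      have hxmem : x ∈ Set.range (QuaternionAlgebra.coe : F₁ → ℍ[F₁, a₁, b₁]) := by
        have hmem : φ x ∈ ⇑φ '' Set.range (QuaternionAlgebra.coe : F₁ → ℍ[F₁, a₁, b₁]) := by
          rw [hφ]; exact ⟨_, hxs.symm⟩
        obtain ⟨y, hy, hyx⟩ := hmem
        rwa [← φ.injective hyx]
      obtain ⟨r, hr⟩ := hxmem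
      subst hr
      rw [QuaternionAlgebra.star_coe, hxs, QuaternionAlgebra.star_coe]
  exact ⟨key, fun x => by rw [map_add, key], fun x => by rw [map_mul, key]⟩
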